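/- Chain rule for dual real differentiability: if f is dual real differentiable at a and g is dual real differentiable at f(a), then g∘f is dual real differentiable at a with D(g∘f)(a) = Dg(f(a)) ∘ Df(a). -/

import Mathlib

open DualNumber

set_option synthInstance.maxHeartbeats 400000
set_option maxHeartbeats 1000000

/-- The `(n,m)`-dimensional module `ℝ⁽²⁾ⁿ'ᵐ = (ℝ⁽²⁾)ⁿ × (ℝ·1#)ᵐ`, realized as a
submodule of `(Fin n → ℝ[ε]) × (Fin m → ℝ[ε])` where the second-block
coordinates have zero real part. -/
def Vnm (n m : ℕ) : Submodule (DualNumber ℝ) ((Fin n → DualNumber ℝ) × (Fin m → DualNumber ℝ)) where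
  carrier := {p | ∀ j, TrivSqZeroExt.fst (p.2 j) = 0}
  add_mem' := by
    intro a b ha hb j
    simp only [Prod.snd_add, Pi.add_apply, TrivSqZeroExt.fst_add, ha j, hb j, add_zero]
  zero_mem' := by intro j; simp
  smul_mem' := by
    intro c p hp j
    show TrivSqZeroExt.fst (c • p.2 j) = 0
    rw [smul_eq_mul, TrivSqZeroExt.fst_mul, hp j, mul_zero]

/-- The norm on `Vnm n m` coming from the inner product
`<x,y> = 2 sum x_i1 y_i1 + sum x_i2 y_i2 + sum x_{n+j} y_{n+j}`. -/
noncomputable def vNorm {n m : ℕ} (v : Vnm n m) : ℝ :=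
  Real.sqrt (2 * ∑ i, TrivSqZeroExt.fst (v.val.1 i) ^ 2
    + ∑ i, TrivSqZeroExt.snd (v.val.1 i) ^ 2
    + ∑ j, TrivSqZeroExt.snd (v.val.2 j) ^ 2)

/-- `f` is dual real differentiable at `a ∈ U` with `ℝ⁽²⁾`-linear derivative `L`
if `‖f x - f a - L (x - a)‖ / ‖x - a‖ → 0` as `x → a` within `U`. -/
def DRDiffAt {n m s t : ℕ} (U : Set (Vnm n m)) (f : Vnm n m → Vnm s t)
    (a : Vnm n m) (L : Vnm n m →ₗ[DualNumber ℝ] Vnm s t) : Prop :=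
  Filter.Tendsto (fun x => vNorm (f x - f a - L (x - a)) / vNorm (x - a))
    (nhdsWithin a (U \ {a})) (nhds 0)

noncomputable def toE (n m : ℕ) : Vnm n m →ₗ[ℝ] EuclideanSpace ℝ ((Fin n ⊕ Fin n) ⊕ Fin m) where
  toFun v := WithLp.toLp 2 fun k => Sum.elim
    (Sum.elim (fun i => Real.sqrt 2 * TrivSqZeroExt.fst (v.val.1 i))
      (fun i => TrivSqZeroExt.snd (v.val.1 i)))
    (fun j => TrivSqZeroExt.snd (v.val.2 j)) k
  map_add' x y := by
    ext k
    rcases k with (i|i)|j <;>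
      simp [TrivSqZeroExt.fst_add, TrivSqZeroExt.snd_add, mul_add]
  map_smul' r x := by
    ext k
    rcases k with (i|i)|j <;>
      simp [TrivSqZeroExt.fst_smul, TrivSqZeroExt.snd_smul, smul_eq_mul] <;> ring

noncomputable def invE (n m : ℕ) : EuclideanSpace ℝ ((Fin n ⊕ Fin n) ⊕ Fin m) →ₗ[ℝ] Vnm n m where
  toFun w := ⟨(fun i => TrivSqZeroExt.inl ((Real.sqrt 2)⁻¹ * w (.inl (.inl i)))
      + TrivSqZeroExt.inr (w (.inl (.inr i))),
      fun j => TrivSqZeroExt.inr (w (.inr j))),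
    fun j => by simp⟩
  map_add' x y := by
    apply Subtype.ext
    refine Prod.ext (funext fun i => ?_) (funext fun j => ?_) <;>
      ext <;>
      simp [TrivSqZeroExt.fst_add, TrivSqZeroExt.snd_add, mul_add]
  map_smul' r x := by
    apply Subtype.ext
    refine Prod.ext (funext fun i => ?_) (funext fun j => ?_) <;>
      ext <;>
      simp [TrivSqZeroExt.fst_smul, TrivSqZeroExt.snd_smul, smul_eq_mul] <;> ring


theorem sqrt2_ne : (Real.sqrt 2 : ℝ) ≠ 0 := by positivity

@[simp] theorem invE_toE {n m : ℕ} (v : Vnm n m) : invE n m (toE n m v) = v := by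
  apply Subtype.ext
  refine Prod.ext (funext fun i => ?_) (funext fun j => ?_)
  · refine TrivSqZeroExt.ext ?_ ?_
    · simp [toE, invE, inv_mul_cancel_left₀ sqrt2_ne]
    · simp [toE, invE]
  · refine TrivSqZeroExt.ext ?_ ?_
    · simpa [toE, invE] using (v.2 j).symm
    · simp [toE, invE]

theorem toE_invE {n m : ℕ} (w : EuclideanSpace ℝ ((Fin n ⊕ Fin n) ⊕ Fin m)) :
    toE n m (invE n m w) = w := by
  ext k
  rcases k with (i|i)|j
  · simp [toE, invE, mul_inv_cancel_left₀ sqrt2_ne]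
  · simp [toE, invE]
  · simp [toE, invE]

theorem norm_toE {n m : ℕ} (v : Vnm n m) : ‖toE n m v‖ = vNorm v := by
  rw [EuclideanSpace.norm_eq, vNorm]
  congr 1
  rw [Fintype.sum_sum_type, Fintype.sum_sum_type]
  simp only [toE, LinearMap.coe_mk, AddHom.coe_mk, Sum.elim_inl, Sum.elim_inr,
    Real.norm_eq_abs, sq_abs, mul_pow, Real.sq_sqrt (by norm_num : (0:ℝ) ≤ 2)]
  rw [Finset.mul_sum]


theorem continuous_toE (n m : ℕ) : Continuous (toE n m) := by
  have h1 : Continuous fun v : Vnm n m => (v : (Fin n → ℝ[ε]) × (Fin m → ℝ[ε])) :=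
    continuous_subtype_val
  have hraw : Continuous fun (v : Vnm n m) (k : (Fin n ⊕ Fin n) ⊕ Fin m) =>
      Sum.elim (Sum.elim (fun i => Real.sqrt 2 * TrivSqZeroExt.fst (v.val.1 i))
        (fun i => TrivSqZeroExt.snd (v.val.1 i)))
        (fun j => TrivSqZeroExt.snd (v.val.2 j)) k := by
    refine continuous_pi fun k => ?_
    rcases k with (i|i)|j
    · exact continuous_const.mul (TrivSqZeroExt.continuous_fst.comp
        ((continuous_apply i).comp (h1.fst)))
    · exact TrivSqZeroExt.continuous_snd.comp ((continuous_apply i).comp (h1.fst))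
    · exact TrivSqZeroExt.continuous_snd.comp ((continuous_apply j).comp (h1.snd))
  exact (PiLp.continuous_toLp 2 fun _ : (Fin n ⊕ Fin n) ⊕ Fin m => ℝ).comp hraw

theorem continuous_invE (n m : ℕ) : Continuous (invE n m) := by
  have hcoord : ∀ k, Continuous fun w : EuclideanSpace ℝ ((Fin n ⊕ Fin n) ⊕ Fin m) => w k :=
    fun k => (continuous_apply k).comp (PiLp.continuous_ofLp 2 fun _ => ℝ)
  refine Continuous.subtype_mk ?_ _
  refine Continuous.prodMk (continuous_pi fun i => ?_) (continuous_pi fun j => ?_)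
  · exact ((TrivSqZeroExt.continuous_inl.comp (continuous_const.mul (hcoord _))).add
      (TrivSqZeroExt.continuous_inr.comp (hcoord _)))
  · exact TrivSqZeroExt.continuous_inr.comp (hcoord _)

noncomputable def eH (n m : ℕ) : Vnm n m ≃ₜ EuclideanSpace ℝ ((Fin n ⊕ Fin n) ⊕ Fin m) where
  toFun := toE n m
  invFun := invE n m
  left_inv := invE_toE
  right_inv := toE_invE
  continuous_toFun := continuous_toE n m
  continuous_invFun := continuous_invE n m

noncomputable def clm {n m s t : ℕ} (L : Vnm n m →ₗ[DualNumber ℝ] Vnm s t) :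
    EuclideanSpace ℝ ((Fin n ⊕ Fin n) ⊕ Fin m) →L[ℝ] EuclideanSpace ℝ ((Fin s ⊕ Fin s) ⊕ Fin t) :=
  LinearMap.toContinuousLinearMap ((toE s t).comp ((L.restrictScalars ℝ).comp (invE n m)))

theorem clm_apply {n m s t : ℕ} (L : Vnm n m →ₗ[DualNumber ℝ] Vnm s t) (w) :
    clm L w = toE s t (L (invE n m w)) := by
  simp [clm]

theorem drDiffAt_iff {n m s t : ℕ} (U : Set (Vnm n m)) (hU : IsOpen U)
    (a : Vnm n m) (ha : a ∈ U) (f : Vnm n m → Vnm s t)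
    (L : Vnm n m →ₗ[DualNumber ℝ] Vnm s t) :
    DRDiffAt U f a L ↔
      HasFDerivAt (fun y => toE s t (f (invE n m y))) (clm L) (toE n m a) := by
  have hfil : nhdsWithin a (U \ {a}) = nhdsWithin a {a}ᶜ := by
    rw [Set.diff_eq, Set.inter_comm]
    exact nhdsWithin_inter_of_mem' (nhdsWithin_le_nhds (hU.mem_nhds ha))
  rw [DRDiffAt, hfil, hasFDerivAt_iff_tendsto]
  set F : EuclideanSpace ℝ ((Fin n ⊕ Fin n) ⊕ Fin m) → EuclideanSpace ℝ ((Fin s ⊕ Fin s) ⊕ Fin t) :=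
    fun y => toE s t (f (invE n m y)) with hF
  set b := toE n m a with hb
  set Q : EuclideanSpace ℝ ((Fin n ⊕ Fin n) ⊕ Fin m) → ℝ :=
    fun y => ‖y - b‖⁻¹ * ‖F y - F b - (clm L) (y - b)‖ with hQ
  have key : ∀ x : Vnm n m, Q (toE n m x)
      = vNorm (f x - f a - L (x - a)) / vNorm (x - a) := by
    intro x
    have h2 : (clm L) (toE n m (x - a)) = toE s t (L (x - a)) := by
      rw [clm_apply, invE_toE]
    simp only [hQ, hF, hb, invE_toE]
    rw [← map_sub (toE n m) x a, h2, ← map_sub (toE s t), ← map_sub (toE s t),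
      norm_toE, norm_toE, div_eq_inv_mul]
  constructor
  · intro h
    rw [← nhdsNE_sup_pure b]
    refine Filter.tendsto_sup.2 ⟨?_, ?_⟩
    · have hpunct : nhdsWithin b {b}ᶜ = Filter.map (toE n m) (nhdsWithin a {a}ᶜ) :=
        ((eH n m).map_punctured_nhds_eq a).symm
      rw [hpunct, Filter.tendsto_map'_iff]
      exact h.congr fun x => (key x).symm
    · have hQ0 : Q b = 0 := by simp [hQ]
      simpa [hQ0] using tendsto_pure_nhds Q b
  · intro h
    have h' := h.mono_left (nhdsWithin_le_nhds : nhdsWithin b {b}ᶜ ≤ nhds b)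
    have hpunct : nhdsWithin b {b}ᶜ = Filter.map (toE n m) (nhdsWithin a {a}ᶜ) :=
      ((eH n m).map_punctured_nhds_eq a).symm
    rw [hpunct, Filter.tendsto_map'_iff] at h'
    exact h'.congr key


/-- chain rule: `D(g ∘ f)(a) = Dg(f a) ∘ Df(a)`. -/
theorem drDiffAt_comp {n m s t p q : ℕ} (U : Set (Vnm n m)) (hU : IsOpen U)
    (W : Set (Vnm s t)) (hW : IsOpen W)
    (a : Vnm n m) (ha : a ∈ U)
    (f : Vnm n m → Vnm s t) (g : Vnm s t → Vnm p q)
    (hfUW : Set.MapsTo f U W) (hfa : f a ∈ W)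
    (Lf : Vnm n m →ₗ[DualNumber ℝ] Vnm s t) (Lg : Vnm s t →ₗ[DualNumber ℝ] Vnm p q)
    (hf : DRDiffAt U f a Lf) (hg : DRDiffAt W g (f a) Lg) :
    DRDiffAt U (g ∘ f) a (Lg.comp Lf) := by
  rw [drDiffAt_iff U hU a ha] at hf
  rw [drDiffAt_iff W hW (f a) hfa] at hg
  rw [drDiffAt_iff U hU a ha]
  have hg' : HasFDerivAt (fun z => toE p q (g (invE s t z))) (clm Lg)
      ((fun y => toE s t (f (invE n m y))) (toE n m a)) := by
    simpa [invE_toE] using hg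
  have hcomp := hg'.comp (toE n m a) hf
  have hfun : ((fun z => toE p q (g (invE s t z))) ∘ (fun y => toE s t (f (invE n m y))))
      = fun y => toE p q ((g ∘ f) (invE n m y)) := by
    funext y
    simp [Function.comp, invE_toE]
  have hlin : (clm Lg).comp (clm Lf) = clm (Lg.comp Lf) := by
    refine ContinuousLinearMap.ext fun y => ?_
    simp [clm_apply, invE_toE]
  rw [hfun, hlin] at hcomp
  exact hcomp
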